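/- For every integer m ≥ 1, the normalized m-th moment Ex[L^m]/λ^m tends to 1/(m+1) as λ → ∞; consequently every moment of L/λ converges to the corresponding moment of the uniform distribution on [0,1]. -/

import Mathlib

set_option maxHeartbeats 1000000

/-- `D lam l = ∑_{k=0}^{l} l! / ((l-k)! * lam^k)`. -/
noncomputable def D (lam : ℝ) (l : ℕ) : ℝ :=
  ∑ k ∈ Finset.range (l + 1),
    (Nat.factorial l : ℝ) / ((Nat.factorial (l - k) : ℝ) * lam ^ k)

namespace NMaux
open Filter Finset Topology

/-- weight -/
noncomputable def w (m l : ℕ) : ℝ := ((l:ℝ)+1)^m - (l:ℝ)^m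

noncomputable def Kf (x : ℝ) : ℕ := ⌊(x ^ ((1:ℝ)/4)) ^ (3:ℕ)⌋₊
noncomputable def NA (x : ℝ) : ℕ := ⌊x⌋₊ - Kf x
noncomputable def MC (x : ℝ) : ℕ := ⌈x⌉₊ + Kf x
noncomputable def MB (x : ℝ) : ℕ := 4 * ⌈x⌉₊
noncomputable def eps1 (x : ℝ) : ℝ := (1 - 2*(Kf x : ℝ)/x)^(Kf x + 1)
noncomputable def aseq (m l : ℕ) : ℝ := ((l:ℝ)+1)^m * Real.sqrt 2 * ((Real.sqrt 2)⁻¹)^l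
noncomputable def Ttail (m : ℕ) (x : ℝ) : ℝ := ∑' l, aseq m (l + MB x)

noncomputable def lo (m : ℕ) (x : ℝ) : ℝ :=
  ((⌊x⌋₊:ℝ)/x)^m - ((⌊x⌋₊:ℝ)/x)^(m+1) + ((⌊x⌋₊:ℝ)/x)^(m+1)/((m:ℝ)+1)

noncomputable def hiA (m : ℕ) (x : ℝ) : ℝ :=
  (((NA x:ℝ)/x)^m - ((NA x:ℝ)/x)^(m+1) + (((NA x:ℝ)+1)/x)^(m+1)/((m:ℝ)+1)
    + ((Kf x:ℝ)/x)*((NA x:ℝ)/x)^m)/(1 - eps1 x)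

noncomputable def hi (m : ℕ) (x : ℝ) : ℝ :=
  hiA m x + (((MC x:ℝ)/x)^m - ((NA x:ℝ)/x)^m)
    + (((MB x:ℝ)/x)^m - ((MC x:ℝ)/x)^m)/((Kf x:ℝ)+1) + Ttail m x/x^m

lemma w_nonneg (m l : ℕ) : 0 ≤ w m l := by
  have := pow_le_pow_left₀ (by positivity : (0:ℝ) ≤ (l:ℝ)) (by linarith : (l:ℝ) ≤ (l:ℝ)+1) m
  simpa [w] using this

lemma sum_w {m : ℕ} (hm : 1 ≤ m) (n : ℕ) : ∑ l ∈ range n, w m l = (n:ℝ)^m := by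
  have := Finset.sum_range_sub (fun l => ((l:ℝ))^m) n
  simp only [w]
  simp only [Nat.cast_add, Nat.cast_one] at this
  rw [Finset.sum_sub_distrib] at this ⊢
  rw [this, Nat.cast_zero, zero_pow (by omega : m ≠ 0), sub_zero]

lemma sum_w_mul (m n : ℕ) :
    ∑ l ∈ range n, w m l * l = (n:ℝ)^(m+1) - ∑ l ∈ range n, ((l:ℝ)+1)^m := by
  have h : ∀ l : ℕ, w m l * l = (((l:ℝ)+1)^(m+1) - (l:ℝ)^(m+1)) - ((l:ℝ)+1)^m := by
    intro l; simp only [w]; ring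
  rw [Finset.sum_congr rfl (fun l _ => h l), Finset.sum_sub_distrib]
  have := Finset.sum_range_sub (fun l => ((l:ℝ))^(m+1)) n
  simp only [Nat.cast_add, Nat.cast_one] at this
  rw [this, Nat.cast_zero, zero_pow (by omega : m+1 ≠ 0), sub_zero]

lemma pow_succ_sub_ge (m : ℕ) {a : ℝ} (ha : 0 ≤ a) :
    ((m:ℝ)+1) * a^m ≤ (a+1)^(m+1) - a^(m+1) := by
  have h := geom_sum₂_mul (a+1) a (m+1)
  have hone : a + 1 - a = 1 := by ring
  rw [hone, mul_one] at h
  rw [← h]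
  calc ((m:ℝ)+1)*a^m = ∑ _i ∈ range (m+1), a^m := by
        rw [Finset.sum_const, Finset.card_range]; push_cast; ring
  _ ≤ ∑ i ∈ range (m+1), (a+1)^i * a^(m+1-1-i) := by
      apply Finset.sum_le_sum; intro i hi
      have hi' : i ≤ m := by simpa [Nat.lt_succ_iff] using hi
      have h2 : a^m = a^i * a^(m+1-1-i) := by rw [← pow_add]; congr 1; omega
      rw [h2]
      exact mul_le_mul_of_nonneg_right (pow_le_pow_left₀ ha (by linarith) i) (by positivity)

lemma pow_succ_sub_le (m : ℕ) {a : ℝ} (ha : 0 ≤ a) :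
    (a+1)^(m+1) - a^(m+1) ≤ ((m:ℝ)+1) * (a+1)^m := by
  have h := geom_sum₂_mul (a+1) a (m+1)
  have hone : a + 1 - a = 1 := by ring
  rw [hone, mul_one] at h
  rw [← h]
  calc ∑ i ∈ range (m+1), (a+1)^i * a^(m+1-1-i)
      ≤ ∑ _i ∈ range (m+1), (a+1)^m := by
        apply Finset.sum_le_sum; intro i hi
        have hi' : i ≤ m := by simpa [Nat.lt_succ_iff] using hi
        have h2 : (a+1)^m = (a+1)^i * (a+1)^(m+1-1-i) := by rw [← pow_add]; congr 1; omega
        rw [h2]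
        exact mul_le_mul_of_nonneg_left
          (pow_le_pow_left₀ (by positivity) (by linarith) _) (by positivity)
    _ = ((m:ℝ)+1) * (a+1)^m := by rw [Finset.sum_const, Finset.card_range]; push_cast; ring

lemma sum_pow_lb (m n : ℕ) : (n:ℝ)^(m+1) ≤ ((m:ℝ)+1) * ∑ l ∈ range n, ((l:ℝ)+1)^m := by
  rw [Finset.mul_sum]
  have h1 : ∀ l ∈ range n, (((l:ℝ)+1)^(m+1) - (l:ℝ)^(m+1)) ≤ ((m:ℝ)+1) * ((l:ℝ)+1)^m :=
    fun l _ => pow_succ_sub_le m (by positivity)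
  have h2 := Finset.sum_le_sum h1
  refine le_trans (le_of_eq ?_) h2
  have := Finset.sum_range_sub (fun l => ((l:ℝ))^(m+1)) n
  simp only [Nat.cast_add, Nat.cast_one] at this
  rw [this, Nat.cast_zero, zero_pow (by omega : m+1 ≠ 0), sub_zero]

lemma sum_pow_ub (m n : ℕ) : ((m:ℝ)+1) * ∑ l ∈ range n, ((l:ℝ)+1)^m ≤ ((n:ℝ)+1)^(m+1) := by
  rw [Finset.mul_sum]
  have h1 : ∀ l ∈ range n, ((m:ℝ)+1) * ((l:ℝ)+1)^m ≤ (((l:ℝ)+1)+1)^(m+1) - ((l:ℝ)+1)^(m+1) :=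
    fun l _ => pow_succ_sub_ge m (by positivity)
  refine le_trans (Finset.sum_le_sum h1) ?_
  have := Finset.sum_range_sub (fun l => ((l:ℝ)+1)^(m+1)) n
  simp only [Nat.cast_add, Nat.cast_one] at this
  rw [this]
  norm_num

lemma D_desc (x : ℝ) (l : ℕ) :
    D x l = ∑ k ∈ range (l+1), (l.descFactorial k : ℝ)/x^k := by
  unfold D
  apply Finset.sum_congr rfl
  intro k hk
  have hk' : k ≤ l := by simpa [Nat.lt_succ_iff] using hk
  have h := Nat.factorial_mul_descFactorial hk'
  have h2 : (l.factorial : ℝ) = ((l-k).factorial : ℝ) * (l.descFactorial k : ℝ) := by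
    rw [← Nat.cast_mul, h]
  rw [h2, mul_div_mul_left _ _ (by positivity : ((l-k).factorial:ℝ) ≠ 0)]

lemma one_le_D {x : ℝ} (hx : 0 < x) (l : ℕ) : 1 ≤ D x l := by
  rw [D_desc]
  have h0 : (0:ℕ) ∈ range (l+1) := by simp
  have := Finset.single_le_sum (f := fun k => (l.descFactorial k : ℝ)/x^k)
    (fun k _ => by positivity) h0
  simpa using this

lemma D_pos {x : ℝ} (hx : 0 < x) (l : ℕ) : 0 < D x l :=
  lt_of_lt_of_le one_pos (one_le_D hx l)

lemma fact_div_le_D {x : ℝ} (hx : 0 < x) (l : ℕ) : (l.factorial : ℝ)/x^l ≤ D x l := by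
  rw [D_desc]
  have h0 : l ∈ range (l+1) := by simp
  have := Finset.single_le_sum (f := fun k => (l.descFactorial k : ℝ)/x^k)
    (fun k _ => by positivity) h0
  simpa [Nat.descFactorial_self] using this

lemma w_le (m l : ℕ) : w m l ≤ ((2:ℝ)^m)^l := by
  have h1 : ((l:ℝ)+1) ≤ 2^l := by
    have := Nat.lt_two_pow_self (n := l)
    have : (l:ℝ) + 1 ≤ ((2^l : ℕ) : ℝ) := by exact_mod_cast this
    simpa using this
  have h2 : ((l:ℝ)+1)^m ≤ ((2:ℝ)^l)^m := pow_le_pow_left₀ (by positivity) h1 m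
  have h3 : ((2:ℝ)^l)^m = ((2:ℝ)^m)^l := by
    rw [← pow_mul, Nat.mul_comm, pow_mul]
  have := w_nonneg m l
  simp only [w] at *
  nlinarith [pow_nonneg (by positivity : (0:ℝ) ≤ (l:ℝ)) m]

lemma summable_f {x : ℝ} (hx : 0 < x) (m : ℕ) :
    Summable (fun l => w m l / D x l) := by
  have hsum : Summable (fun l : ℕ => ((2:ℝ)^m * x)^l / l.factorial) :=
    Real.summable_pow_div_factorial _
  refine Summable.of_nonneg_of_le
    (fun l => div_nonneg (w_nonneg m l) (D_pos hx l).le) ?_ hsum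
  · intro l
    have hfd : (0:ℝ) < (l.factorial : ℝ)/x^l := by positivity
    have h0 := one_div_le_one_div_of_le hfd (fact_div_le_D hx l)
    have h1 : w m l / D x l ≤ w m l / ((l.factorial : ℝ)/x^l) := by
      rw [div_eq_mul_one_div, div_eq_mul_one_div (w m l)]
      exact mul_le_mul_of_nonneg_left h0 (w_nonneg m l)
    have h2 : w m l / ((l.factorial : ℝ)/x^l) = w m l * x^l / l.factorial := by
      field_simp
    have h3 : w m l * x^l / l.factorial ≤ ((2:ℝ)^m)^l * x^l / l.factorial := by
      gcongr
      exact w_le m l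
    calc w m l / D x l ≤ w m l * x^l / l.factorial := by rw [← h2]; exact h1
    _ ≤ ((2:ℝ)^m)^l * x^l / l.factorial := h3
    _ = ((2:ℝ)^m * x)^l / l.factorial := by rw [mul_pow]

lemma D_le {x : ℝ} (hx : 0 < x) {l : ℕ} (hl : (l:ℝ) < x) :
    D x l ≤ (1 - (l:ℝ)/x)⁻¹ := by
  have hr0 : 0 ≤ (l:ℝ)/x := by positivity
  have hr1 : (l:ℝ)/x < 1 := (div_lt_one hx).mpr hl
  rw [D_desc]
  calc ∑ k ∈ range (l+1), (l.descFactorial k : ℝ)/x^k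
      ≤ ∑ k ∈ range (l+1), ((l:ℝ)/x)^k := by
        apply Finset.sum_le_sum
        intro k _
        rw [div_pow]
        gcongr
        exact_mod_cast Nat.descFactorial_le_pow l k
    _ ≤ ∑' k : ℕ, ((l:ℝ)/x)^k := by
        apply Summable.sum_le_tsum _ (fun k _ => by positivity)
        exact summable_geometric_of_lt_one hr0 hr1
    _ = (1 - (l:ℝ)/x)⁻¹ := tsum_geometric_of_lt_one hr0 hr1

lemma desc_ge {l k K : ℕ} (hkK : k ≤ K) (hKl : K ≤ l) :
    ((l:ℝ) - K)^k ≤ (l.descFactorial k : ℝ) := by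
  have h5 : ((l + 1 - k : ℕ) : ℝ) ^ k ≤ (l.descFactorial k : ℝ) := by
    exact_mod_cast Nat.pow_sub_le_descFactorial l k
  refine le_trans (pow_le_pow_left₀ ?_ ?_ k) h5
  · have : (K:ℝ) ≤ l := by exact_mod_cast hKl
    linarith
  · have hc : ((l + 1 - k : ℕ) : ℝ) = (l:ℝ) + 1 - k := by
      have hk1 : k ≤ l + 1 := by omega
      push_cast [hk1]
      ring
    rw [hc]
    have h1 : (k:ℝ) ≤ K := by exact_mod_cast hkK
    linarith

lemma D_ge_A {x : ℝ} (hx : 0 < x) (hK1 : 1 ≤ Kf x) (h2K : 2*(Kf x:ℝ) ≤ x)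
    {l : ℕ} (hl : l < NA x) :
    (1 - eps1 x)/(1 - ((l:ℝ) - Kf x)/x) ≤ D x l := by
  have hKfloor : Kf x ≤ ⌊x⌋₊ := by
    apply Nat.le_floor
    have : (0:ℝ) ≤ (Kf x : ℝ) := by positivity
    linarith
  have hNA : (NA x : ℝ) = (⌊x⌋₊ : ℝ) - Kf x := by
    rw [NA]; push_cast [hKfloor]; ring
  have hfl : (⌊x⌋₊ : ℝ) ≤ x := Nat.floor_le hx.le
  have hlNA : (l:ℝ) ≤ (NA x : ℝ) - 1 := by
    have : (l:ℝ) < (NA x:ℝ) := by exact_mod_cast hl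
    have : l + 1 ≤ NA x := hl
    have := (Nat.cast_le (α := ℝ)).mpr this
    push_cast at this
    linarith
  have hlx : (l:ℝ) ≤ x - Kf x - 1 := by rw [hNA] at hlNA; linarith
  set r := ((l:ℝ) - Kf x)/x with hr
  have hrle : r ≤ 1 - 2*(Kf x:ℝ)/x := by
    rw [hr, div_le_iff₀ hx]
    have : (1 - 2*(Kf x:ℝ)/x)*x = x - 2*Kf x := by field_simp
    rw [this]
    linarith
  have hbase0 : 0 ≤ 1 - 2*(Kf x:ℝ)/x := by
    have : 2*(Kf x:ℝ)/x ≤ 1 := by rw [div_le_one hx]; linarith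
    linarith
  have hbase1 : 1 - 2*(Kf x:ℝ)/x < 1 := by
    have hKpos : (0:ℝ) < (Kf x:ℝ) := by exact_mod_cast hK1
    have : 0 < 2*(Kf x:ℝ)/x := by positivity
    linarith
  have heps0 : 0 ≤ eps1 x := pow_nonneg hbase0 _
  have heps1 : eps1 x < 1 := pow_lt_one₀ hbase0 hbase1 (by omega)
  have hrlt1 : r < 1 := lt_of_le_of_lt hrle hbase1
  have h1r : 0 < 1 - r := by linarith
  rcases le_or_gt (Kf x) l with hKl | hlK
  · have hKr : (Kf x:ℝ) ≤ l := by exact_mod_cast hKl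
    have hr0 : 0 ≤ r := by
      apply div_nonneg _ hx.le; linarith
    have hsub : ∑ k ∈ range (Kf x+1), ((l.descFactorial k : ℝ)/x^k) ≤ D x l := by
      rw [D_desc]
      apply Finset.sum_le_sum_of_subset_of_nonneg
      · exact Finset.range_subset_range.mpr (by omega)
      · intro k _ _; positivity
    have hterm : ∀ k ∈ range (Kf x+1), r^k ≤ (l.descFactorial k : ℝ)/x^k := by
      intro k hk
      have hkK : k ≤ Kf x := by simpa [Nat.lt_succ_iff] using hk
      have hd := desc_ge hkK hKl
      rw [hr, div_pow]
      gcongr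
    have hgeom : ∑ k ∈ range (Kf x+1), r^k = (1 - r^(Kf x+1))/(1-r) := by
      have hg := geom_sum_mul r (Kf x+1)
      rw [eq_div_iff (by linarith : (1:ℝ) - r ≠ 0)]
      nlinarith [hg]
    calc (1 - eps1 x)/(1-r) ≤ (1 - r^(Kf x+1))/(1-r) := by
          have hre : r^(Kf x+1) ≤ eps1 x := pow_le_pow_left₀ hr0 hrle _
          gcongr
      _ = ∑ k ∈ range (Kf x+1), r^k := hgeom.symm
      _ ≤ ∑ k ∈ range (Kf x+1), ((l.descFactorial k : ℝ)/x^k) := Finset.sum_le_sum hterm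
      _ ≤ D x l := hsub
  · have hlKr : (l:ℝ) < Kf x := by exact_mod_cast hlK
    have hr_neg : r < 0 := div_neg_of_neg_of_pos (by linarith) hx
    have hle1 : (1 - eps1 x)/(1-r) ≤ 1 := by
      rw [div_le_one h1r]; linarith
    linarith [one_le_D hx l]

lemma D_ge_C {x : ℝ} (hx : 0 < x) {l : ℕ} (hl : x + (Kf x:ℝ) ≤ (l:ℝ)) :
    (Kf x:ℝ)+1 ≤ D x l := by
  have hKl : Kf x ≤ l := by
    have : (Kf x:ℝ) ≤ l := by linarith
    exact_mod_cast this
  rw [D_desc]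
  have hsub : range (Kf x+1) ⊆ range (l+1) := Finset.range_subset_range.mpr (by omega)
  calc (Kf x:ℝ)+1 = ∑ _k ∈ range (Kf x+1), (1:ℝ) := by
        rw [Finset.sum_const, Finset.card_range]; push_cast; ring
    _ ≤ ∑ k ∈ range (Kf x+1), (l.descFactorial k:ℝ)/x^k := by
        apply Finset.sum_le_sum; intro k hk
        have hkK : k ≤ Kf x := by simpa [Nat.lt_succ_iff] using hk
        have hd := desc_ge hkK hKl
        have hxk : x^k ≤ ((l:ℝ) - Kf x)^k := pow_le_pow_left₀ hx.le (by linarith) k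
        rw [le_div_iff₀ (pow_pos hx k), one_mul]
        exact le_trans hxk hd
    _ ≤ ∑ k ∈ range (l+1), (l.descFactorial k:ℝ)/x^k := by
        apply Finset.sum_le_sum_of_subset_of_nonneg hsub
        intro k _ _; positivity

lemma D_ge_tail {x : ℝ} (hx : 0 < x) {l : ℕ} (hl : 4*x ≤ (l:ℝ)) :
    (Real.sqrt 2)^l / Real.sqrt 2 ≤ D x l := by
  set j := l/2 with hj
  have hjl : j ≤ l := Nat.div_le_self l 2
  have hjhalf : (j:ℝ) ≤ (l:ℝ)/2 := by
    have h2 : (j:ℝ)*2 ≤ l := by exact_mod_cast Nat.div_mul_le_self l 2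
    linarith
  have h2x : 2*x ≤ (l:ℝ)+1-j := by linarith
  have hterm : ((2:ℝ))^j ≤ (l.descFactorial j : ℝ)/x^j := by
    have h5 : ((l + 1 - j : ℕ) : ℝ)^j ≤ (l.descFactorial j : ℝ) := by
      exact_mod_cast Nat.pow_sub_le_descFactorial l j
    have hc : ((l + 1 - j : ℕ) : ℝ) = (l:ℝ) + 1 - j := by
      have hk1 : j ≤ l + 1 := by omega
      push_cast [hk1]; ring
    have h6 : (2*x)^j ≤ ((l:ℝ)+1-(j:ℝ))^j := pow_le_pow_left₀ (by positivity) h2x j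
    rw [le_div_iff₀ (pow_pos hx j)]
    calc (2:ℝ)^j * x^j = (2*x)^j := (mul_pow 2 x j).symm
      _ ≤ ((l:ℝ)+1-(j:ℝ))^j := h6
      _ = ((l + 1 - j : ℕ) : ℝ)^j := by rw [hc]
      _ ≤ (l.descFactorial j : ℝ) := h5
  have hD : (2:ℝ)^j ≤ D x l := by
    rw [D_desc]
    refine le_trans hterm ?_
    have hmem : j ∈ range (l+1) := by simp [Nat.lt_succ_iff]; omega
    exact Finset.single_le_sum (f := fun k => (l.descFactorial k : ℝ)/x^k)
      (fun k _ => by positivity) hmem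
  have hs2 : (Real.sqrt 2)^2 = 2 := Real.sq_sqrt (by norm_num)
  have hsq1 : (1:ℝ) ≤ Real.sqrt 2 := by
    rw [show (1:ℝ) = Real.sqrt 1 from (Real.sqrt_one).symm]
    exact Real.sqrt_le_sqrt (by norm_num)
  have hsqrt2 : (Real.sqrt 2)^l ≤ 2^j * Real.sqrt 2 := by
    rw [show l = 2*j + l%2 from by omega, pow_add, pow_mul, hs2]
    have hml : l % 2 = 0 ∨ l % 2 = 1 := by omega
    have hfac : (Real.sqrt 2)^(l%2) ≤ Real.sqrt 2 := by
      rcases hml with h|h <;> rw [h] <;> simp [hsq1]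
    exact mul_le_mul_of_nonneg_left hfac (by positivity)
  rw [div_le_iff₀ (by positivity : (0:ℝ) < Real.sqrt 2)]
  calc (Real.sqrt 2)^l ≤ 2^j * Real.sqrt 2 := hsqrt2
    _ ≤ D x l * Real.sqrt 2 := by
        exact mul_le_mul_of_nonneg_right hD (by positivity)
lemma eps1_le {x : ℝ} (hx : 0 < x) (hK1 : 1 ≤ Kf x) (h2K : 2*(Kf x:ℝ) ≤ x) :
    eps1 x ≤ x/(2*(Kf x:ℝ)^2) := by
  set a := 2*(Kf x:ℝ)/x with ha
  have hK0 : (1:ℝ) ≤ (Kf x:ℝ) := by exact_mod_cast hK1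
  have ha0 : 0 < a := by rw [ha]; apply div_pos (by linarith) hx
  have ha1 : a ≤ 1 := by rw [ha, div_le_one hx]; linarith
  have hb0 : 0 ≤ 1 - a := by linarith
  have h2 : 1 + ((Kf x + 1 : ℕ):ℝ)*a ≤ (1+a)^(Kf x + 1) := one_add_mul_le_pow (by linarith) _
  have hpos : 0 < 1 + ((Kf x + 1 : ℕ):ℝ)*a := by positivity
  have h3 : eps1 x * (1 + ((Kf x + 1 : ℕ):ℝ)*a) ≤ 1 := by
    calc eps1 x * (1 + ((Kf x + 1 : ℕ):ℝ)*a) ≤ (1-a)^(Kf x+1) * (1+a)^(Kf x+1) :=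
          mul_le_mul_of_nonneg_left h2 (pow_nonneg hb0 _)
      _ = ((1-a)*(1+a))^(Kf x+1) := (mul_pow _ _ _).symm
      _ ≤ 1^(Kf x+1) := pow_le_pow_left₀ (by nlinarith) (by nlinarith) _
      _ = 1 := one_pow _
  have hden : 2*(Kf x:ℝ)^2/x ≤ 1 + ((Kf x + 1 : ℕ):ℝ)*a := by
    have h4 : ((Kf x + 1 : ℕ):ℝ)*a = ((Kf x:ℝ) + 1)*(2*(Kf x:ℝ)/x) := by push_cast; ring
    have h5 : 2*(Kf x:ℝ)^2/x ≤ ((Kf x:ℝ) + 1)*(2*(Kf x:ℝ)/x) := by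
      rw [div_le_iff₀ hx]
      have hKx : 0 ≤ (Kf x:ℝ)/x := by positivity
      field_simp
      nlinarith
    linarith [h4 ▸ h5]
  have hd0 : 0 < 2*(Kf x:ℝ)^2/x := by positivity
  calc eps1 x ≤ 1/(1 + ((Kf x + 1 : ℕ):ℝ)*a) := by
        rw [le_div_iff₀ hpos]; exact h3
    _ ≤ 1/(2*(Kf x:ℝ)^2/x) := one_div_le_one_div_of_le hd0 hden
    _ = x/(2*(Kf x:ℝ)^2) := by rw [one_div_div]

lemma t_pow4 {x : ℝ} (hx : 0 ≤ x) : (x ^ ((1:ℝ)/4))^(4:ℕ) = x := by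
  rw [← Real.rpow_natCast (x ^ ((1:ℝ)/4)) 4, ← Real.rpow_mul hx]; norm_num

lemma t_ge {x : ℝ} (hx : 256 ≤ x) : 4 ≤ x ^ ((1:ℝ)/4) := by
  have h0 : (0:ℝ) ≤ x := by linarith
  have h4 : ((4:ℝ))^(4:ℕ) ≤ (x ^ ((1:ℝ)/4))^(4:ℕ) := by rw [t_pow4 h0]; norm_num; linarith
  exact le_of_pow_le_pow_left₀ (by norm_num) (by positivity) h4

lemma Kf_le {x : ℝ} (hx : 0 ≤ x) : (Kf x : ℝ) ≤ (x ^ ((1:ℝ)/4))^(3:ℕ) :=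
  Nat.floor_le (by positivity)

lemma Kf_ge (x : ℝ) : (x ^ ((1:ℝ)/4))^(3:ℕ) - 1 ≤ (Kf x : ℝ) :=
  (Nat.sub_one_lt_floor _).le

-- master facts
lemma facts {x : ℝ} (hx : 256 ≤ x) :
    0 < x ∧ 1 ≤ Kf x ∧ 2*(Kf x:ℝ) ≤ x ∧ Kf x ≤ ⌊x⌋₊ ∧ (Kf x:ℝ) ≤ x/4 := by
  have hx0 : (0:ℝ) < x := by linarith
  set t := x ^ ((1:ℝ)/4) with ht
  have ht4 : 4 ≤ t := t_ge hx
  have htp : t^(4:ℕ) = x := t_pow4 hx0.le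
  have hKle : (Kf x : ℝ) ≤ t^(3:ℕ) := Kf_le hx0.le
  have hKge : t^(3:ℕ) - 1 ≤ (Kf x : ℝ) := Kf_ge x
  have ht3 : (64:ℝ) ≤ t^(3:ℕ) := by
    have h := pow_le_pow_left₀ (by norm_num : (0:ℝ) ≤ 4) ht4 3
    norm_num at h; linarith
  have hK1 : 1 ≤ Kf x := by
    have : (1:ℝ) ≤ (Kf x:ℝ) := by linarith
    exact_mod_cast this
  have h4K : 4*(Kf x:ℝ) ≤ x := by
    have hfac : t^(4:ℕ) - 4*t^(3:ℕ) = t^(3:ℕ)*(t-4) := by ring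
    have : 0 ≤ t^(3:ℕ)*(t-4) := mul_nonneg (by linarith) (by linarith)
    nlinarith
  have h2K : 2*(Kf x:ℝ) ≤ x := by
    have h0 : (0:ℝ) ≤ (Kf x:ℝ) := by positivity
    linarith
  have hKfl : Kf x ≤ ⌊x⌋₊ := by
    apply Nat.le_floor
    have h0 : (0:ℝ) ≤ (Kf x:ℝ) := by positivity
    linarith
  exact ⟨hx0, hK1, h2K, hKfl, by linarith⟩

lemma summable_aseq (m : ℕ) : Summable (aseq m) := by
  have hsq : Real.sqrt 2 ^ 2 = 2 := Real.sq_sqrt (by norm_num)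
  have hs2 : (1:ℝ) < Real.sqrt 2 := by nlinarith [Real.sqrt_nonneg 2]
  have hr0 : (0:ℝ) < (Real.sqrt 2)⁻¹ := by positivity
  have hr : ‖(Real.sqrt 2)⁻¹‖ < 1 := by
    rw [Real.norm_eq_abs, abs_of_pos hr0]
    exact inv_lt_one_of_one_lt₀ hs2
  have h0 := summable_pow_mul_geometric_of_norm_lt_one m hr
  have h2 := (summable_nat_add_iff 1).mpr h0
  apply (h2.mul_left 2).congr
  intro n
  have h2r : 2 * (Real.sqrt 2)⁻¹ = Real.sqrt 2 := by
    field_simp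
    exact hsq.symm
  unfold aseq
  push_cast
  rw [pow_succ]
  calc 2 * (((n:ℝ)+1)^m * ((Real.sqrt 2)⁻¹^n * (Real.sqrt 2)⁻¹))
      = ((n:ℝ)+1)^m * (2 * (Real.sqrt 2)⁻¹) * (Real.sqrt 2)⁻¹^n := by ring
    _ = ((n:ℝ)+1)^m * Real.sqrt 2 * (Real.sqrt 2)⁻¹^n := by rw [h2r]

lemma aseq_nonneg (m l : ℕ) : 0 ≤ aseq m l := by unfold aseq; positivity

lemma Ttail_nonneg (m : ℕ) (x : ℝ) : 0 ≤ Ttail m x :=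
  tsum_nonneg (fun l => aseq_nonneg m _)

lemma MB_tendsto : Tendsto (fun x : ℝ => MB x) atTop atTop := by
  apply tendsto_atTop_mono (fun x => ?_) (tendsto_nat_floor_atTop (α := ℝ))
  calc ⌊x⌋₊ ≤ ⌈x⌉₊ := Nat.floor_le_ceil x
    _ ≤ 4 * ⌈x⌉₊ := by omega

lemma Ttail_tendsto (m : ℕ) : Tendsto (fun x => Ttail m x) atTop (𝓝 0) :=
  (tendsto_sum_nat_add (fun l => aseq m l)).comp MB_tendsto

lemma K_div_tendsto : Tendsto (fun x : ℝ => (Kf x:ℝ)/x) atTop (𝓝 0) := by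
  apply tendsto_of_tendsto_of_tendsto_of_le_of_le'
    (tendsto_const_nhds (x := (0:ℝ))) (tendsto_rpow_neg_atTop (by norm_num : (0:ℝ) < 1/4))
  · filter_upwards [eventually_gt_atTop (0:ℝ)] with x hx
    positivity
  · filter_upwards [eventually_gt_atTop (0:ℝ)] with x hx
    have h1 : (Kf x:ℝ) ≤ (x ^ ((1:ℝ)/4))^(3:ℕ) := Kf_le hx.le
    have h2 : (x ^ ((1:ℝ)/4))^(3:ℕ) = x ^ ((3:ℝ)/4) := by
      rw [← Real.rpow_natCast (x ^ ((1:ℝ)/4)) 3, ← Real.rpow_mul hx.le]; norm_num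
    calc (Kf x:ℝ)/x ≤ (x ^ ((3:ℝ)/4))/x := by
          apply (div_le_div_iff_of_pos_right hx).mpr
          rw [← h2]; exact h1
      _ = x ^ (-(1/4):ℝ) := by
          rw [show x ^ ((3:ℝ)/4) / x = x ^ ((3:ℝ)/4) / x ^ (1:ℝ) by rw [Real.rpow_one],
            ← Real.rpow_sub hx]
          norm_num

lemma K_atTop : Tendsto (fun x : ℝ => (Kf x:ℝ)) atTop atTop := by
  apply tendsto_atTop_mono' atTop (f₁ := fun x : ℝ => x ^ ((3:ℝ)/4) - 1)
  · filter_upwards [eventually_gt_atTop (0:ℝ)] with x hx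
    have h2 : (x ^ ((1:ℝ)/4))^(3:ℕ) = x ^ ((3:ℝ)/4) := by
      rw [← Real.rpow_natCast (x ^ ((1:ℝ)/4)) 3, ← Real.rpow_mul hx.le]; norm_num
    have := Kf_ge x
    rw [h2] at this
    exact this
  · exact (tendsto_rpow_atTop (by norm_num)).atTop_add tendsto_const_nhds

lemma eps1_nonneg {x : ℝ} (hx : 256 ≤ x) : 0 ≤ eps1 x := by
  obtain ⟨hx0, hK1, h2K, hKfl, hK4⟩ := facts hx
  apply pow_nonneg
  have : 2*(Kf x:ℝ)/x ≤ 1 := by rw [div_le_one hx0]; linarith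
  linarith

lemma eps1_tendsto : Tendsto (fun x => eps1 x) atTop (𝓝 0) := by
  have hg : Tendsto (fun x : ℝ => 2 * x ^ (-(1/2):ℝ)) atTop (𝓝 0) := by
    have := (tendsto_rpow_neg_atTop (by norm_num : (0:ℝ) < 1/2)).const_mul (2:ℝ)
    simpa using this
  apply tendsto_of_tendsto_of_tendsto_of_le_of_le' tendsto_const_nhds hg
  · filter_upwards [eventually_ge_atTop (256:ℝ)] with x hx using eps1_nonneg hx
  · filter_upwards [eventually_ge_atTop (256:ℝ)] with x hx
    obtain ⟨hx0, hK1, h2K, hKfl, hK4⟩ := facts hx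
    set t := x ^ ((1:ℝ)/4) with ht
    have ht4 : 4 ≤ t := t_ge hx
    have htp : t^(4:ℕ) = x := t_pow4 hx0.le
    have hKge : t^(3:ℕ) - 1 ≤ (Kf x : ℝ) := Kf_ge x
    have ht3 : (64:ℝ) ≤ t^(3:ℕ) := by
      have h := pow_le_pow_left₀ (by norm_num : (0:ℝ) ≤ 4) ht4 3
      norm_num at h; linarith
    have hKhalf : t^(3:ℕ)/2 ≤ (Kf x:ℝ) := by linarith
    have hK2 : t^(6:ℕ)/4 ≤ (Kf x:ℝ)^2 := by
      have h := mul_le_mul hKhalf hKhalf (by linarith) (by positivity)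
      calc t^(6:ℕ)/4 = (t^(3:ℕ)/2) * (t^(3:ℕ)/2) := by ring
        _ ≤ (Kf x:ℝ) * (Kf x:ℝ) := h
        _ = (Kf x:ℝ)^2 := (sq (Kf x:ℝ)).symm
    have ht0 : (0:ℝ) < t := by linarith
    have h1 := eps1_le hx0 hK1 h2K
    have hKpos : (0:ℝ) < (Kf x:ℝ) := by exact_mod_cast hK1
    have hK2' : t^(6:ℕ)/2 ≤ 2*(Kf x:ℝ)^2 := by linarith
    have hstep : x/(2*(Kf x:ℝ)^2) ≤ x/(t^(6:ℕ)/2) := by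
      have hinv := one_div_le_one_div_of_le (by positivity : (0:ℝ) < t^(6:ℕ)/2) hK2'
      rw [div_eq_mul_one_div, div_eq_mul_one_div x (t^(6:ℕ)/2)]
      exact mul_le_mul_of_nonneg_left hinv hx0.le
    have hid : x/(t^(6:ℕ)/2) = 2 * x ^ (-(1/2):ℝ) := by
      have hxhalf : x ^ ((1:ℝ)/2) = t^(2:ℕ) := by
        rw [ht, ← Real.rpow_natCast (x ^ ((1:ℝ)/4)) 2, ← Real.rpow_mul (by linarith : (0:ℝ) ≤ x)]
        norm_num
      rw [Real.rpow_neg (by linarith : (0:ℝ) ≤ x), hxhalf, ← htp]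
      field_simp
    calc eps1 x ≤ x/(2*(Kf x:ℝ)^2) := h1
      _ ≤ x/(t^(6:ℕ)/2) := hstep
      _ = 2 * x ^ (-(1/2):ℝ) := hid

lemma inv_K_tendsto : Tendsto (fun x : ℝ => ((Kf x:ℝ)+1)⁻¹) atTop (𝓝 0) :=
  (K_atTop.atTop_add tendsto_const_nhds).inv_tendsto_atTop

lemma NA_cast {x : ℝ} (hx : 256 ≤ x) : (NA x:ℝ) = (⌊x⌋₊:ℝ) - (Kf x:ℝ) := by
  obtain ⟨hx0, hK1, h2K, hKfl, hK4⟩ := facts hx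
  rw [NA]; push_cast [hKfl]; ring

lemma NA_div_tendsto : Tendsto (fun x : ℝ => (NA x:ℝ)/x) atTop (𝓝 1) := by
  have h := (tendsto_nat_floor_div_atTop (R := ℝ)).sub K_div_tendsto
  rw [sub_zero] at h
  apply h.congr'
  filter_upwards [eventually_ge_atTop (256:ℝ)] with x hx
  rw [NA_cast hx, sub_div]

lemma MC_div_tendsto : Tendsto (fun x : ℝ => (MC x:ℝ)/x) atTop (𝓝 1) := by
  have h := (tendsto_nat_ceil_div_atTop (R := ℝ)).add K_div_tendsto
  rw [add_zero] at h
  apply h.congr'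
  filter_upwards [] with x
  rw [MC]; push_cast; rw [add_div]

lemma MB_div_tendsto : Tendsto (fun x : ℝ => (MB x:ℝ)/x) atTop (𝓝 4) := by
  have h := (tendsto_nat_ceil_div_atTop (R := ℝ)).const_mul (4:ℝ)
  rw [mul_one] at h
  apply h.congr'
  filter_upwards [] with x
  rw [MB]; push_cast; ring

lemma lo_tendsto (m : ℕ) : Tendsto (lo m) atTop (𝓝 (1/((m:ℝ)+1))) := by
  have hfl := tendsto_nat_floor_div_atTop (R := ℝ)
  have h1 : Tendsto (fun x : ℝ => ((⌊x⌋₊:ℝ)/x)^m) atTop (𝓝 1) := by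
    simpa using hfl.pow m
  have h2 : Tendsto (fun x : ℝ => ((⌊x⌋₊:ℝ)/x)^(m+1)) atTop (𝓝 1) := by
    simpa using hfl.pow (m+1)
  have h3 := (h1.sub h2).add (h2.div_const ((m:ℝ)+1))
  have hval : (1:ℝ) - 1 + 1/((m:ℝ)+1) = 1/((m:ℝ)+1) := by ring
  rw [hval] at h3
  exact h3

lemma Ttail_div_tendsto (m : ℕ) : Tendsto (fun x => Ttail m x / x^m) atTop (𝓝 0) := by
  apply tendsto_of_tendsto_of_tendsto_of_le_of_le' tendsto_const_nhds (Ttail_tendsto m)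
  · filter_upwards [eventually_ge_atTop (1:ℝ)] with x hx
    have : (0:ℝ) < x^m := by positivity
    exact div_nonneg (Ttail_nonneg m x) this.le
  · filter_upwards [eventually_ge_atTop (1:ℝ)] with x hx
    apply div_le_self (Ttail_nonneg m x)
    exact one_le_pow₀ hx

lemma hi_tendsto (m : ℕ) : Tendsto (hi m) atTop (𝓝 (1/((m:ℝ)+1))) := by
  have hinv : Tendsto (fun x : ℝ => x⁻¹) atTop (𝓝 0) := tendsto_inv_atTop_zero
  have hNA := NA_div_tendsto
  have hNAm : Tendsto (fun x : ℝ => ((NA x:ℝ)/x)^m) atTop (𝓝 1) := by simpa using hNA.pow m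
  have hNAm1 : Tendsto (fun x : ℝ => ((NA x:ℝ)/x)^(m+1)) atTop (𝓝 1) := by
    simpa using hNA.pow (m+1)
  have hNA1 : Tendsto (fun x : ℝ => (((NA x:ℝ)+1)/x)^(m+1)) atTop (𝓝 1) := by
    have h := hNA.add hinv
    rw [add_zero] at h
    have h' : Tendsto (fun x : ℝ => ((NA x:ℝ)+1)/x) atTop (𝓝 1) := by
      apply h.congr'
      filter_upwards [eventually_gt_atTop (0:ℝ)] with x hx
      rw [add_div, one_div]
    simpa using h'.pow (m+1)
  have hKd := K_div_tendsto
  have heps := eps1_tendsto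
  have hnum := ((hNAm.sub hNAm1).add (hNA1.div_const ((m:ℝ)+1))).add (hKd.mul hNAm)
  have hden : Tendsto (fun x => 1 - eps1 x) atTop (𝓝 1) := by
    have := (tendsto_const_nhds (x := (1:ℝ)) (f := atTop)).sub heps
    simpa using this
  have hA : Tendsto (hiA m) atTop (𝓝 (1/((m:ℝ)+1))) := by
    have h := hnum.div hden (by norm_num)
    have hval : ((1:ℝ) - 1 + 1/((m:ℝ)+1) + 0*1)/1 = 1/((m:ℝ)+1) := by ring
    rw [hval] at h
    exact h
  have hMC := MC_div_tendsto
  have hMCm : Tendsto (fun x : ℝ => ((MC x:ℝ)/x)^m) atTop (𝓝 1) := by simpa using hMC.pow m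
  have hB : Tendsto (fun x : ℝ => ((MC x:ℝ)/x)^m - ((NA x:ℝ)/x)^m) atTop (𝓝 0) := by
    have := hMCm.sub hNAm
    simpa using this
  have hMBm : Tendsto (fun x : ℝ => ((MB x:ℝ)/x)^m) atTop (𝓝 (4^m)) := by
    have := MB_div_tendsto.pow m
    simpa using this
  have hC : Tendsto (fun x : ℝ => (((MB x:ℝ)/x)^m - ((MC x:ℝ)/x)^m)/((Kf x:ℝ)+1))
      atTop (𝓝 0) := by
    have h := (hMBm.sub hMCm).mul inv_K_tendsto
    rw [mul_zero] at h
    apply h.congr'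
    filter_upwards [] with x
    simp [div_eq_mul_inv]
  have htot := ((hA.add hB).add hC).add (Ttail_div_tendsto m)
  have hval : (1/((m:ℝ)+1) + 0 + 0 + 0) = 1/((m:ℝ)+1) := by ring
  rw [hval] at htot
  exact htot


lemma lo_le_S {x : ℝ} (hx : 256 ≤ x) {m : ℕ} (hm : 1 ≤ m) :
    lo m x ≤ (∑' l, w m l / D x l) / x^m := by
  have hx0 : (0:ℝ) < x := by linarith
  have hxm : (0:ℝ) < x^m := by positivity
  set N := ⌊x⌋₊ with hN
  have hNx : (N:ℝ) ≤ x := Nat.floor_le hx0.le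
  have hstep1 : ∑ l ∈ range N, w m l * (1 - (l:ℝ)/x) ≤ ∑' l, w m l / D x l := by
    refine le_trans (Finset.sum_le_sum ?_) (Summable.sum_le_tsum (range N)
      (fun l _ => div_nonneg (w_nonneg m l) (D_pos hx0 l).le) (summable_f hx0 m))
    intro l hl
    have hlN : l < N := Finset.mem_range.mp hl
    have hlx : (l:ℝ) < x := by
      have : (l:ℝ) < (N:ℝ) := by exact_mod_cast hlN
      linarith
    have hD := D_le hx0 hlx
    have hDpos := D_pos hx0 l
    have hinv := one_div_le_one_div_of_le hDpos hD
    rw [one_div, inv_inv] at hinv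
    calc w m l * (1 - (l:ℝ)/x) ≤ w m l * (1/(D x l)) :=
          mul_le_mul_of_nonneg_left hinv (w_nonneg m l)
      _ = w m l / D x l := by rw [mul_one_div]
  have hsum : ∑ l ∈ range N, w m l * (1 - (l:ℝ)/x)
      = (N:ℝ)^m - ((N:ℝ)^(m+1) - ∑ l ∈ range N, ((l:ℝ)+1)^m)/x := by
    calc ∑ l ∈ range N, w m l * (1 - (l:ℝ)/x)
        = ∑ l ∈ range N, (w m l - (w m l * l)/x) := by
          apply Finset.sum_congr rfl; intro l _; field_simp
      _ = (∑ l ∈ range N, w m l) - (∑ l ∈ range N, w m l * l)/x := by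
          rw [Finset.sum_sub_distrib, Finset.sum_div]
      _ = _ := by rw [sum_w hm, sum_w_mul]
  have hSig : (N:ℝ)^(m+1)/((m:ℝ)+1) ≤ ∑ l ∈ range N, ((l:ℝ)+1)^m := by
    have h := sum_pow_lb m N
    rw [div_le_iff₀ (by positivity : (0:ℝ) < (m:ℝ)+1)]
    linarith
  have hlow : (N:ℝ)^m - (N:ℝ)^(m+1)/x + (N:ℝ)^(m+1)/(((m:ℝ)+1)*x)
      ≤ ∑' l, w m l / D x l := by
    refine le_trans ?_ hstep1
    rw [hsum, sub_div]
    have h1 : (N:ℝ)^(m+1)/((m:ℝ)+1)/x ≤ (∑ l ∈ range N, ((l:ℝ)+1)^m)/x :=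
      (div_le_div_iff_of_pos_right hx0).mpr hSig
    have h2 : (N:ℝ)^(m+1)/(((m:ℝ)+1)*x) = (N:ℝ)^(m+1)/((m:ℝ)+1)/x := by
      rw [div_div]
    linarith
  have hlo : lo m x = ((N:ℝ)^m - (N:ℝ)^(m+1)/x + (N:ℝ)^(m+1)/(((m:ℝ)+1)*x))/x^m := by
    rw [lo, ← hN]
    rw [div_pow, div_pow]
    field_simp
    ring
  rw [hlo]
  exact (div_le_div_iff_of_pos_right hxm).mpr hlow

lemma S_le_hi {x : ℝ} (hx : 256 ≤ x) {m : ℕ} (hm : 1 ≤ m) :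
    (∑' l, w m l / D x l) / x^m ≤ hi m x := by
  obtain ⟨hx0, hK1, h2K, hKfl, hK4⟩ := facts hx
  have hxm : (0:ℝ) < x^m := by positivity
  have hsumf := summable_f hx0 m
  have hK0 : (0:ℝ) < (Kf x:ℝ) := by exact_mod_cast hK1
  -- epsilon facts
  have hbase0 : 0 ≤ 1 - 2*(Kf x:ℝ)/x := by
    have : 2*(Kf x:ℝ)/x ≤ 1 := by rw [div_le_one hx0]; linarith
    linarith
  have hbase1 : 1 - 2*(Kf x:ℝ)/x < 1 := by
    have : 0 < 2*(Kf x:ℝ)/x := by positivity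
    linarith
  have heps0 : 0 ≤ eps1 x := pow_nonneg hbase0 _
  have heps1 : eps1 x < 1 := pow_lt_one₀ hbase0 hbase1 (by omega)
  have h1e : 0 < 1 - eps1 x := by linarith
  -- index ordering
  have hflc : ⌊x⌋₊ ≤ ⌈x⌉₊ := Nat.floor_le_ceil x
  have hKceil : Kf x ≤ ⌈x⌉₊ := le_trans hKfl hflc
  have hNAMC : NA x ≤ MC x := by rw [MC, NA]; omega
  have hMCMB : MC x ≤ MB x := by rw [MC, MB]; omega
  have hNAMB : NA x ≤ MB x := le_trans hNAMC hMCMB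
  have hceilx : x ≤ (⌈x⌉₊:ℝ) := Nat.le_ceil x
  have hMCx : x + (Kf x:ℝ) ≤ (MC x:ℝ) := by rw [MC]; push_cast; linarith
  have hMB4x : 4*x ≤ (MB x:ℝ) := by rw [MB]; push_cast; linarith
  have hNAc : (NA x:ℝ) = (⌊x⌋₊:ℝ) - (Kf x:ℝ) := NA_cast hx
  have hflx : (⌊x⌋₊:ℝ) ≤ x := Nat.floor_le hx0.le
  -- split tsum
  have hsplit := Summable.sum_add_tsum_nat_add (f := fun l => w m l / D x l) (MB x) hsumf
  -- tail bound
  have htail : (∑' l, w m (l + MB x) / D x (l + MB x)) ≤ Ttail m x := by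
    show _ ≤ ∑' l, aseq m (l + MB x)
    refine Summable.tsum_le_tsum (f := fun l => w m (l + MB x) / D x (l + MB x))
      (g := fun l => aseq m (l + MB x)) ?_
      ((summable_nat_add_iff (f := fun l => w m l / D x l) (MB x)).mpr hsumf)
      ((summable_nat_add_iff (f := aseq m) (MB x)).mpr (summable_aseq m))
    intro l
    have hl0 : (0:ℝ) ≤ (l:ℝ) := Nat.cast_nonneg l
    have h4x : 4*x ≤ ((l + MB x : ℕ):ℝ) := by push_cast; linarith
    have hD := D_ge_tail hx0 h4x
    have hs2pos : (0:ℝ) < Real.sqrt 2 := by positivity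
    have hc0 : (0:ℝ) < (Real.sqrt 2)^(l + MB x) / Real.sqrt 2 := by positivity
    have hi1 := one_div_le_one_div_of_le hc0 hD
    have hid : 1/((Real.sqrt 2)^(l + MB x) / Real.sqrt 2)
        = Real.sqrt 2 * ((Real.sqrt 2)⁻¹)^(l + MB x) := by
      rw [one_div_div, div_eq_mul_inv, ← inv_pow, mul_comm]
    rw [hid] at hi1
    have hwle : w m (l + MB x) ≤ (((l + MB x : ℕ):ℝ)+1)^m := by
      have h0 : (0:ℝ) ≤ ((l + MB x : ℕ):ℝ)^m := by positivity
      simp only [w]; linarith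
    calc w m (l + MB x) / D x (l + MB x)
        = w m (l + MB x) * (1/D x (l + MB x)) := by rw [mul_one_div]
      _ ≤ w m (l + MB x) * (Real.sqrt 2 * ((Real.sqrt 2)⁻¹)^(l + MB x)) :=
          mul_le_mul_of_nonneg_left hi1 (w_nonneg m _)
      _ ≤ (((l + MB x : ℕ):ℝ)+1)^m * (Real.sqrt 2 * ((Real.sqrt 2)⁻¹)^(l + MB x)) :=
          mul_le_mul_of_nonneg_right hwle (by positivity)
      _ = aseq m (l + MB x) := by rw [aseq]; ring
  -- region C bound
  have hC : ∑ l ∈ Ico (MC x) (MB x), w m l / D x l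
      ≤ ((MB x:ℝ)^m - (MC x:ℝ)^m)/((Kf x:ℝ)+1) := by
    have hle : ∀ l ∈ Ico (MC x) (MB x), w m l / D x l ≤ w m l / ((Kf x:ℝ)+1) := by
      intro l hl
      have hlMC : MC x ≤ l := (Finset.mem_Ico.mp hl).1
      have hcast : (MC x:ℝ) ≤ (l:ℝ) := by exact_mod_cast hlMC
      have hD := D_ge_C hx0 (le_trans hMCx hcast)
      have hK1' : (0:ℝ) < (Kf x:ℝ)+1 := by positivity
      have hi1 := one_div_le_one_div_of_le hK1' hD
      calc w m l / D x l = w m l * (1/D x l) := by rw [mul_one_div]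
        _ ≤ w m l * (1/((Kf x:ℝ)+1)) := mul_le_mul_of_nonneg_left hi1 (w_nonneg m l)
        _ = w m l / ((Kf x:ℝ)+1) := by rw [mul_one_div]
    calc ∑ l ∈ Ico (MC x) (MB x), w m l / D x l
        ≤ ∑ l ∈ Ico (MC x) (MB x), w m l / ((Kf x:ℝ)+1) := Finset.sum_le_sum hle
      _ = (∑ l ∈ Ico (MC x) (MB x), w m l)/((Kf x:ℝ)+1) := by rw [← Finset.sum_div]
      _ = ((MB x:ℝ)^m - (MC x:ℝ)^m)/((Kf x:ℝ)+1) := by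
          rw [Finset.sum_Ico_eq_sub _ hMCMB, sum_w hm, sum_w hm]
  -- region B bound
  have hB : ∑ l ∈ Ico (NA x) (MC x), w m l / D x l ≤ (MC x:ℝ)^m - (NA x:ℝ)^m := by
    have hle : ∀ l ∈ Ico (NA x) (MC x), w m l / D x l ≤ w m l := by
      intro l _
      have h1 := one_le_D hx0 l
      have hD := D_pos hx0 l
      rw [div_le_iff₀ hD]
      nlinarith [w_nonneg m l]
    calc ∑ l ∈ Ico (NA x) (MC x), w m l / D x l
        ≤ ∑ l ∈ Ico (NA x) (MC x), w m l := Finset.sum_le_sum hle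
      _ = (MC x:ℝ)^m - (NA x:ℝ)^m := by
          rw [Finset.sum_Ico_eq_sub _ hNAMC, sum_w hm, sum_w hm]
  -- region A bound
  have hA : ∑ l ∈ range (NA x), w m l / D x l
      ≤ ((NA x:ℝ)^m - (NA x:ℝ)^(m+1)/x + ((NA x:ℝ)+1)^(m+1)/(((m:ℝ)+1)*x)
          + ((Kf x:ℝ)/x)*(NA x:ℝ)^m)/(1 - eps1 x) := by
    have hle : ∀ l ∈ range (NA x), w m l / D x l
        ≤ w m l * (1 - ((l:ℝ) - (Kf x:ℝ))/x) / (1 - eps1 x) := by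
      intro l hl
      have hlNA : l < NA x := Finset.mem_range.mp hl
      have hD := D_ge_A hx0 hK1 h2K hlNA
      have hlc : (l:ℝ) < (NA x:ℝ) := by exact_mod_cast hlNA
      have hr1 : ((l:ℝ) - (Kf x:ℝ))/x < 1 := by
        rw [div_lt_one hx0]
        rw [hNAc] at hlc
        linarith
      have h1r : 0 < 1 - ((l:ℝ) - (Kf x:ℝ))/x := by linarith
      have hcpos : 0 < (1 - eps1 x)/(1 - ((l:ℝ) - (Kf x:ℝ))/x) := by positivity
      have hi1 := one_div_le_one_div_of_le hcpos hD
      rw [one_div_div] at hi1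
      calc w m l / D x l = w m l * (1/D x l) := by rw [mul_one_div]
        _ ≤ w m l * ((1 - ((l:ℝ) - (Kf x:ℝ))/x)/(1 - eps1 x)) :=
            mul_le_mul_of_nonneg_left hi1 (w_nonneg m l)
        _ = w m l * (1 - ((l:ℝ) - (Kf x:ℝ))/x) / (1 - eps1 x) := by rw [mul_div_assoc]
    refine le_trans (Finset.sum_le_sum hle) ?_
    rw [← Finset.sum_div]
    apply (div_le_div_iff_of_pos_right h1e).mpr
    have hexp : ∑ l ∈ range (NA x), w m l * (1 - ((l:ℝ) - (Kf x:ℝ))/x)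
        = (∑ l ∈ range (NA x), w m l * (1 - (l:ℝ)/x))
          + (Kf x:ℝ)/x * ∑ l ∈ range (NA x), w m l := by
      rw [Finset.mul_sum, ← Finset.sum_add_distrib]
      apply Finset.sum_congr rfl
      intro l _
      field_simp
      ring
    have hE : ∑ l ∈ range (NA x), w m l * (1 - (l:ℝ)/x)
        = (NA x:ℝ)^m - ((NA x:ℝ)^(m+1) - ∑ l ∈ range (NA x), ((l:ℝ)+1)^m)/x := by
      calc ∑ l ∈ range (NA x), w m l * (1 - (l:ℝ)/x)
          = ∑ l ∈ range (NA x), (w m l - (w m l * l)/x) := by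
            apply Finset.sum_congr rfl; intro l _; field_simp
        _ = (∑ l ∈ range (NA x), w m l) - (∑ l ∈ range (NA x), w m l * l)/x := by
            rw [Finset.sum_sub_distrib, Finset.sum_div]
        _ = _ := by rw [sum_w hm, sum_w_mul]
    have hSig : ∑ l ∈ range (NA x), ((l:ℝ)+1)^m ≤ ((NA x:ℝ)+1)^(m+1)/((m:ℝ)+1) := by
      have h := sum_pow_ub m (NA x)
      rw [le_div_iff₀ (by positivity : (0:ℝ) < (m:ℝ)+1)]
      linarith
    rw [hexp, hE, sum_w hm]
    have h1 : (∑ l ∈ range (NA x), ((l:ℝ)+1)^m)/x ≤ ((NA x:ℝ)+1)^(m+1)/((m:ℝ)+1)/x :=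
      (div_le_div_iff_of_pos_right hx0).mpr hSig
    have h2 : ((NA x:ℝ)+1)^(m+1)/(((m:ℝ)+1)*x) = ((NA x:ℝ)+1)^(m+1)/((m:ℝ)+1)/x := by
      rw [div_div]
    rw [sub_div (((NA x:ℝ))^(m+1)) _ x]
    linarith
  -- split the finite sum
  have hsplit2 : ∑ l ∈ range (MB x), w m l / D x l
      = ∑ l ∈ range (NA x), w m l / D x l
        + ∑ l ∈ Ico (NA x) (MC x), w m l / D x l
        + ∑ l ∈ Ico (MC x) (MB x), w m l / D x l := by
    rw [Finset.range_eq_Ico,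
      ← Finset.sum_Ico_consecutive (fun l => w m l / D x l) (Nat.zero_le (NA x)) hNAMB,
      ← Finset.sum_Ico_consecutive (fun l => w m l / D x l) hNAMC hMCMB,
      ← Finset.range_eq_Ico, add_assoc]
  -- total
  have hS : ∑' l, w m l / D x l
      ≤ ((NA x:ℝ)^m - (NA x:ℝ)^(m+1)/x + ((NA x:ℝ)+1)^(m+1)/(((m:ℝ)+1)*x)
          + ((Kf x:ℝ)/x)*(NA x:ℝ)^m)/(1 - eps1 x)
        + ((MC x:ℝ)^m - (NA x:ℝ)^m)
        + ((MB x:ℝ)^m - (MC x:ℝ)^m)/((Kf x:ℝ)+1) + Ttail m x := by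
    rw [← hsplit, hsplit2]
    linarith
  refine le_trans ((div_le_div_iff_of_pos_right hxm).mpr hS) (le_of_eq ?_)
  -- identity with hi
  rw [hi, hiA]
  rw [add_div, add_div, add_div]
  congr 1
  · congr 1
    · congr 1
      · rw [div_div]
        rw [div_pow, div_pow, div_pow]
        rw [div_eq_iff (by positivity : (1 - eps1 x) * x^m ≠ 0)]
        field_simp
        ring
      · rw [div_pow, div_pow, sub_div]
    · rw [div_pow, div_pow]
      rw [div_div]
      rw [div_eq_iff (by positivity : ((Kf x:ℝ)+1) * x^m ≠ 0)]
      field_simp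
      try ring
      try exact Or.inl trivial

end NMaux

/-- For every integer `m ≥ 1`, the normalized `m`-th moment `Ex[L^m]/λ^m` tends to
`1/(m+1)` as `λ → ∞`, where `Ex[L^m] = ∑_{l=0}^∞ ((l+1)^m − l^m)/D_λ(l)`; i.e. the
moments of `L/λ` converge to the moments of the uniform distribution on `[0,1]`. -/
theorem normalized_moments_tendsto (m : ℕ) (hm : 1 ≤ m) :
    Filter.Tendsto
      (fun lam : ℝ => (∑' l : ℕ, (((l : ℝ) + 1) ^ m - (l : ℝ) ^ m) / D lam l) / lam ^ m)
      Filter.atTop (nhds (1 / (m + 1))) := by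
  have h := tendsto_of_tendsto_of_tendsto_of_le_of_le'
    (NMaux.lo_tendsto m) (NMaux.hi_tendsto m)
    (by filter_upwards [Filter.eventually_ge_atTop (256:ℝ)] with x hx using
      NMaux.lo_le_S hx hm)
    (by filter_upwards [Filter.eventually_ge_atTop (256:ℝ)] with x hx using
      NMaux.S_le_hi hx hm)
  exact h
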